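/- Let 𝒜 on X and ℱ, 𝒢 on U be σ-algebras. If there exist σ-algebras 𝒜₀ on X and ℰ on U with (𝒜 ⊗ ℱ) ∩ (𝒜 ⊗ 𝒢) = 𝒜₀ ⊗ ℰ, then (𝒜 ⊗ ℱ) ∩ (𝒜 ⊗ 𝒢) = 𝒜 ⊗ (ℱ ∩ 𝒢). In particular, the distributivity equation (𝒜 ⊗ ℱ) ∩ (𝒜 ⊗ 𝒢) = 𝒜 ⊗ (ℱ ∩ 𝒢) holds if and only if the left-hand side has product form. -/
import Mathlib

open MeasurableSpace

private lemma ms_empty_eq {α : Type*} [IsEmpty α] (m₁ m₂ : MeasurableSpace α) : m₁ = m₂ := by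
  ext s
  have : s = ∅ := Set.eq_empty_of_isEmpty s
  subst this
  exact ⟨fun _ => @MeasurableSet.empty _ m₂, fun _ => @MeasurableSet.empty _ m₁⟩

private lemma sec_left {X U : Type*} (mX : MeasurableSpace X) (mU : MeasurableSpace U)
    {S : Set (X × U)} (hS : @MeasurableSet _ (mX.prod mU) S) (x : X) :
    @MeasurableSet _ mU {u | (x, u) ∈ S} :=
  @measurable_prodMk_left X U mX mU x S hS

private lemma sec_right {X U : Type*} (mX : MeasurableSpace X) (mU : MeasurableSpace U)
    {S : Set (X × U)} (hS : @MeasurableSet _ (mX.prod mU) S) (u : U) :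
    @MeasurableSet _ mX {x | (x, u) ∈ S} :=
  @measurable_prodMk_right X U mX mU u S hS

private lemma prod_mono {X U : Type*} {m₁ m₂ : MeasurableSpace X} {n₁ n₂ : MeasurableSpace U}
    (h₁ : m₁ ≤ m₂) (h₂ : n₁ ≤ n₂) : m₁.prod n₁ ≤ m₂.prod n₂ :=
  sup_le_sup (MeasurableSpace.comap_mono h₁) (MeasurableSpace.comap_mono h₂)

private lemma key {X U : Type*} (𝒜 : MeasurableSpace X) (ℱ 𝒢 : MeasurableSpace U)
    (h : ∃ (𝒜₀ : MeasurableSpace X) (ℰ : MeasurableSpace U),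
        𝒜.prod ℱ ⊓ 𝒜.prod 𝒢 = 𝒜₀.prod ℰ) :
    𝒜.prod ℱ ⊓ 𝒜.prod 𝒢 = 𝒜.prod (ℱ ⊓ 𝒢) := by
  have hle : 𝒜.prod (ℱ ⊓ 𝒢) ≤ 𝒜.prod ℱ ⊓ 𝒜.prod 𝒢 :=
    le_inf (prod_mono le_rfl inf_le_left) (prod_mono le_rfl inf_le_right)
  by_cases hX : Nonempty X
  · by_cases hU : Nonempty U
    · obtain ⟨𝒜₀, ℰ, hprod⟩ := h
      obtain ⟨x₀⟩ := hX
      obtain ⟨u₀⟩ := hU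
      refine le_antisymm ?_ hle
      rw [hprod]
      have h𝒜 : 𝒜₀ ≤ 𝒜 := by
        intro A hA
        have hrect : @MeasurableSet _ (𝒜₀.prod ℰ) (A ×ˢ (Set.univ : Set U)) :=
          @MeasurableSet.prod _ _ 𝒜₀ ℰ _ _ hA MeasurableSet.univ
        rw [← hprod] at hrect
        have := sec_right 𝒜 ℱ hrect.1 u₀
        simpa using this
      have hℰ : ℰ ≤ ℱ ⊓ 𝒢 := by
        intro E hE
        have hrect : @MeasurableSet _ (𝒜₀.prod ℰ) ((Set.univ : Set X) ×ˢ E) :=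
          @MeasurableSet.prod _ _ 𝒜₀ ℰ _ _ MeasurableSet.univ hE
        rw [← hprod] at hrect
        have h1 := sec_left 𝒜 ℱ hrect.1 x₀
        have h2 := sec_left 𝒜 𝒢 hrect.2 x₀
        exact ⟨by simpa using h1, by simpa using h2⟩
      exact prod_mono h𝒜 hℰ
    · have : IsEmpty U := not_nonempty_iff.mp hU
      have hFG : ℱ = 𝒢 := ms_empty_eq ℱ 𝒢
      have hFF : ℱ ⊓ 𝒢 = ℱ := by rw [hFG, inf_idem]
      rw [hFG]; simp
  · have : IsEmpty X := not_nonempty_iff.mp hX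
    have : IsEmpty (X × U) := inferInstance
    exact ms_empty_eq _ _

theorem stmt_3 (X U : Type*) (𝒜 : MeasurableSpace X) (ℱ 𝒢 : MeasurableSpace U) :
    ((∃ (𝒜₀ : MeasurableSpace X) (ℰ : MeasurableSpace U),
        𝒜.prod ℱ ⊓ 𝒜.prod 𝒢 = 𝒜₀.prod ℰ) →
      𝒜.prod ℱ ⊓ 𝒜.prod 𝒢 = 𝒜.prod (ℱ ⊓ 𝒢)) ∧
    ((𝒜.prod ℱ ⊓ 𝒜.prod 𝒢 = 𝒜.prod (ℱ ⊓ 𝒢)) ↔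
      ∃ (𝒜₀ : MeasurableSpace X) (ℰ : MeasurableSpace U),
        𝒜.prod ℱ ⊓ 𝒜.prod 𝒢 = 𝒜₀.prod ℰ) := by
  refine ⟨key 𝒜 ℱ 𝒢, ⟨fun h => ⟨𝒜, ℱ ⊓ 𝒢, h⟩, key 𝒜 ℱ 𝒢⟩⟩
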